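/- Let σ be a permutation of Fin n and let A_σ be its permutation matrix over ℂ, with entries (A_σ)_{i,j} = 1 if σ i = j and 0 otherwise. Then the characteristic polynomial of A_σ equals (X − 1)^{n − (σ.cycleType).sum} * ∏_{ℓ ∈ σ.cycleType} (X^ℓ − 1). In particular, each cycle of length ℓ in the cycle decomposition of σ contributes exactly once to the multiplicity of each ℓ-th root of unity as an eigenvalue of A_σ. -/

import Mathlib

open Polynomial

namespace PermCharpolyAux

open Equiv Equiv.Perm Matrix Finset

variable {β : Type*} [Fintype β] [DecidableEq β]

lemma permMatrix_apply (σ : Equiv.Perm β) (i j : β) :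
    (σ.toPEquiv.toMatrix : Matrix β β ℂ) i j = if σ i = j then 1 else 0 := by
  simp [PEquiv.toMatrix_apply, Equiv.toPEquiv, Option.mem_def, eq_comm]

/-- Only `1` and `τ⁻¹` can contribute to the determinant of the charmatrix. -/
lemma eq_one_or_eq_inv (τ : Equiv.Perm β) (hτ : τ.IsCycle) (π : Equiv.Perm β)
    (hc : ∀ i, π i = i ∨ π i = τ⁻¹ i) : π = 1 ∨ π = τ⁻¹ := by
  classical
  set S : Finset β := Finset.univ.filter (fun i => π i = τ⁻¹ i ∧ π i ≠ i) with hS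
  have hmemS : ∀ i, i ∈ S ↔ (π i = τ⁻¹ i ∧ π i ≠ i) := by
    intro i; simp [hS]
  rcases S.eq_empty_or_nonempty with hSe | hSne
  · left
    ext i
    rcases hc i with h | h
    · simpa using h
    · by_cases h2 : π i = i
      · simpa using h2
      · exact absurd ((hmemS i).2 ⟨h, h2⟩) (by simp [hSe])
  · right
    have Ssub : ∀ i ∈ S, i ∈ τ.support := by
      intro i hi
      obtain ⟨h1, h2⟩ := (hmemS i).1 hi
      rw [Equiv.Perm.mem_support]
      intro h
      have hinv : τ⁻¹ i = i := by
        rw [Equiv.Perm.inv_eq_iff_eq]; exact h.symm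
      exact h2 (h1.trans hinv)
    -- S is closed under τ⁻¹
    have hclinv : ∀ i ∈ S, τ⁻¹ i ∈ S := by
      intro i hi
      obtain ⟨h1, h2⟩ := (hmemS i).1 hi
      have hii : τ⁻¹ i ≠ i := by rw [← h1]; exact h2
      rcases hc (τ⁻¹ i) with h | h
      · -- π (τ⁻¹ i) = τ⁻¹ i = π i, so τ⁻¹ i = i, contradiction
        exact absurd (π.injective (h.trans h1.symm)) hii
      · refine (hmemS _).2 ⟨h, ?_⟩
        rw [h]
        intro hcontra
        exact hii (τ⁻¹.injective hcontra)
    -- hence also closed under τ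
    have himg : S.image (fun i => τ⁻¹ i) ⊆ S := by
      intro j hj
      obtain ⟨i, hi, rfl⟩ := Finset.mem_image.1 hj
      exact hclinv i hi
    have heq : S.image (fun i => τ⁻¹ i) = S :=
      Finset.eq_of_subset_of_card_le himg
        (le_of_eq (Finset.card_image_of_injective _ τ⁻¹.injective).symm)
    have hcl : ∀ i ∈ S, τ i ∈ S := by
      intro i hi
      rw [← heq] at hi
      obtain ⟨j, hj, hji⟩ := Finset.mem_image.1 hi
      have : τ i = j := by rw [← hji, ← Equiv.Perm.mul_apply, mul_inv_cancel, Equiv.Perm.one_apply]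
      rwa [this]
    have hz : ∀ k : ℤ, ∀ i ∈ S, (τ ^ k) i ∈ S := by
      intro k
      induction k using Int.induction_on with
      | zero => simpa using fun i hi => hi
      | succ k ih =>
          intro i hi
          have : (τ ^ (k + 1 : ℤ)) i = τ ((τ ^ (k : ℤ)) i) := by
            rw [add_comm, _root_.zpow_one_add, Equiv.Perm.mul_apply]
          rw [this]
          exact hcl _ (ih i hi)
      | pred k ih =>
          intro i hi
          have : (τ ^ (-k - 1 : ℤ)) i = τ⁻¹ ((τ ^ (-k : ℤ)) i) := by
            rw [show (-k - 1 : ℤ) = (-1) + (-k) by ring, _root_.zpow_add, _root_.zpow_neg_one,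
              Equiv.Perm.mul_apply]
          rw [this]
          exact hclinv _ (ih i hi)
    -- the whole support is in S
    obtain ⟨i₀, hi₀⟩ := hSne
    have hsupS : ∀ j ∈ τ.support, j ∈ S := by
      intro j hj
      obtain ⟨x, hx, hall⟩ := hτ
      obtain ⟨k, hk⟩ := hall (Equiv.Perm.mem_support.1 (Ssub i₀ hi₀))
      obtain ⟨m, hm⟩ := hall (Equiv.Perm.mem_support.1 hj)
      have hxS : x ∈ S := by
        have := hz (-k) i₀ hi₀
        rw [← hk] at this
        simpa [← Equiv.Perm.mul_apply, ← _root_.zpow_add] using this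
      have := hz m x hxS
      rwa [hm] at this
    ext i
    by_cases hi : i ∈ τ.support
    · exact ((hmemS i).1 (hsupS i hi)).1
    · have h1 : τ i = i := Equiv.Perm.notMem_support.1 hi
      have h2 : τ⁻¹ i = i := by
        rw [← h1, ← Equiv.Perm.mul_apply, inv_mul_cancel, Equiv.Perm.one_apply, h1]
      rcases hc i with h | h
      · rw [h, h2]
      · exact h

/-- The charpoly of the permutation matrix of a cycle. -/
lemma charpoly_isCycle (τ : Equiv.Perm β) (hτ : τ.IsCycle) :
    (τ.toPEquiv.toMatrix : Matrix β β ℂ).charpoly =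
      (X - 1) ^ (Fintype.card β - τ.support.card) *
        ((X : ℂ[X]) ^ τ.support.card - 1) := by
  classical
  set A : Matrix β β ℂ := τ.toPEquiv.toMatrix with hA
  have hAapp : ∀ i j, A i j = if τ i = j then 1 else 0 := permMatrix_apply τ
  have hne : τ ≠ 1 := hτ.ne_one
  have h1ne : (1 : Equiv.Perm β) ≠ τ⁻¹ := by
    intro h; exact hne (by rw [← inv_inv τ, ← h]; simp)
  rw [Matrix.charpoly, Matrix.det_apply]
  have hzero : ∀ π ∈ Finset.univ, π ∉ ({1, τ⁻¹} : Finset (Equiv.Perm β)) →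
      (Equiv.Perm.sign π • ∏ i, (charmatrix A) (π i) i) = 0 := by
    intro π _ hπ
    simp only [Finset.mem_insert, Finset.mem_singleton] at hπ
    push_neg at hπ
    have : ∃ i, π i ≠ i ∧ π i ≠ τ⁻¹ i := by
      by_contra hcon
      push_neg at hcon
      have hc : ∀ i, π i = i ∨ π i = τ⁻¹ i := by
        intro i
        by_cases h : π i = i
        · exact Or.inl h
        · exact Or.inr (hcon i h)
      rcases eq_one_or_eq_inv τ hτ π hc with h | h
      · exact hπ.1 h
      · exact hπ.2 h
    obtain ⟨i, hi1, hi2⟩ := this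
    have hent : (charmatrix A) (π i) i = 0 := by
      rw [charmatrix_apply_ne _ _ _ hi1, hAapp]
      have : τ (π i) ≠ i := fun h => hi2 ((Equiv.Perm.inv_eq_iff_eq.2 h.symm).symm)
      simp [this]
    rw [Finset.prod_eq_zero (f := fun j => (charmatrix A) (π j) j) (Finset.mem_univ i) hent,
      smul_zero]
  rw [← Finset.sum_subset (Finset.subset_univ ({1, τ⁻¹} : Finset (Equiv.Perm β))) hzero,
    Finset.sum_pair h1ne]
  have hterm1 : (Equiv.Perm.sign (1 : Equiv.Perm β)) • ∏ i, (charmatrix A) ((1 : Equiv.Perm β) i) i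
      = X ^ τ.support.card * (X - 1) ^ (Fintype.card β - τ.support.card) := by
    rw [Equiv.Perm.sign_one, one_smul]
    have : ∀ i : β, (charmatrix A) ((1 : Equiv.Perm β) i) i
        = if i ∈ τ.support then X else X - 1 := by
      intro i
      rw [Equiv.Perm.one_apply, charmatrix_apply_eq, hAapp]
      by_cases h : i ∈ τ.support
      · rw [if_pos h, if_neg (Equiv.Perm.mem_support.1 h)]
        simp
      · rw [if_neg h, if_pos (Equiv.Perm.notMem_support.1 h)]
        simp
    rw [Finset.prod_congr rfl (fun i _ => this i), ← Finset.prod_mul_prod_compl τ.support,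
      Finset.prod_ite_of_true (fun i hi => hi) _ _,
      Finset.prod_ite_of_false (fun i hi => by simpa using hi) _ _,
      Finset.prod_const, Finset.prod_const, Finset.card_compl]
  have hterm2 : (Equiv.Perm.sign τ⁻¹) • ∏ i, (charmatrix A) (τ⁻¹ i) i
      = -((X - 1) ^ (Fintype.card β - τ.support.card)) := by
    have hval : ∀ i : β, (charmatrix A) (τ⁻¹ i) i
        = if i ∈ τ.support then -1 else X - 1 := by
      intro i
      by_cases h : i ∈ τ.support
      · have hne' : τ⁻¹ i ≠ i := by
          intro hcontra
          exact Equiv.Perm.mem_support.1 h (by conv_lhs => rw [← hcontra, ← Equiv.Perm.mul_apply, mul_inv_cancel, Equiv.Perm.one_apply])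
        rw [if_pos h, charmatrix_apply_ne _ _ _ hne', hAapp]
        simp
      · have h1 : τ i = i := Equiv.Perm.notMem_support.1 h
        have h2 : τ⁻¹ i = i := by rw [← h1, ← Equiv.Perm.mul_apply, inv_mul_cancel, Equiv.Perm.one_apply, h1]
        rw [if_neg h, h2, charmatrix_apply_eq, hAapp, if_pos h1]
        simp
    have hprod : ∏ i, (charmatrix A) (τ⁻¹ i) i
        = (-1) ^ τ.support.card * (X - 1) ^ (Fintype.card β - τ.support.card) := by
      rw [Finset.prod_congr rfl (fun i _ => hval i), ← Finset.prod_mul_prod_compl τ.support,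
        Finset.prod_ite_of_true (fun i hi => hi) _ _,
        Finset.prod_ite_of_false (fun i hi => by simpa using hi) _ _,
        Finset.prod_const, Finset.prod_const, Finset.card_compl]
    rw [hprod, Equiv.Perm.sign_inv, hτ.sign]
    have hcast : ((-(-1) ^ τ.support.card : ℤˣ) : ℤ) = -(-1) ^ τ.support.card := by simp
    rw [Units.smul_def, hcast, zsmul_eq_mul]
    push_cast
    have h11 : ((-1 : ℂ[X]) ^ τ.support.card) * ((-1 : ℂ[X]) ^ τ.support.card) = 1 := by
      rw [← mul_pow]; norm_num
    linear_combination (-((X - 1 : ℂ[X]) ^ (Fintype.card β - τ.support.card))) * h11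
  rw [hterm1, hterm2]
  ring

lemma permMatrix_submatrix (σ : Equiv.Perm β) (s : Finset β)
    (hp : ∀ x, x ∈ s ↔ σ x ∈ s) :
    ((σ.toPEquiv.toMatrix : Matrix β β ℂ).submatrix (Equiv.sumCompl (· ∈ s))
        (Equiv.sumCompl (· ∈ s))) =
      Matrix.fromBlocks
        ((σ.subtypePerm (fun x => (hp x).symm)).toPEquiv.toMatrix : Matrix {x // x ∈ s} {x // x ∈ s} ℂ)
        0 0
        ((σ.subtypePerm (fun x => not_iff_not.2 (hp x).symm)).toPEquiv.toMatrix :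
          Matrix {x // ¬ x ∈ s} {x // ¬ x ∈ s} ℂ) := by
  ext i j
  rcases i with a | a <;> rcases j with b | b <;>
    simp only [Matrix.submatrix_apply, Equiv.sumCompl_apply_inl, Equiv.sumCompl_apply_inr,
      Matrix.fromBlocks_apply₁₁, Matrix.fromBlocks_apply₁₂, Matrix.fromBlocks_apply₂₁,
      Matrix.fromBlocks_apply₂₂, permMatrix_apply, Matrix.zero_apply]
  · simp [Equiv.Perm.subtypePerm_apply, Subtype.ext_iff]
  · have : σ (a : β) ≠ (b : β) := by
      intro h
      have := (hp a).1 a.2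
      rw [h] at this
      exact b.2 this
    simp [this]
  · have : σ (a : β) ≠ (b : β) := by
      intro h
      have := b.2
      rw [← h] at this
      exact a.2 ((hp a).2 this)
    simp [this]
  · simp [Equiv.Perm.subtypePerm_apply, Subtype.ext_iff]

lemma charpoly_split (σ : Equiv.Perm β) (s : Finset β)
    (hp : ∀ x, x ∈ s ↔ σ x ∈ s) :
    (σ.toPEquiv.toMatrix : Matrix β β ℂ).charpoly =
      ((σ.subtypePerm (fun x => (hp x).symm)).toPEquiv.toMatrix : Matrix {x // x ∈ s} {x // x ∈ s} ℂ).charpoly *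
      ((σ.subtypePerm (fun x => not_iff_not.2 (hp x).symm)).toPEquiv.toMatrix :
        Matrix {x // ¬ x ∈ s} {x // ¬ x ∈ s} ℂ).charpoly := by
  rw [← Matrix.charpoly_reindex (Equiv.sumCompl (· ∈ s)).symm
      (σ.toPEquiv.toMatrix : Matrix β β ℂ)]
  have : (Matrix.reindex (Equiv.sumCompl (· ∈ s)).symm (Equiv.sumCompl (· ∈ s)).symm
      (σ.toPEquiv.toMatrix : Matrix β β ℂ)) =
      (σ.toPEquiv.toMatrix : Matrix β β ℂ).submatrix (Equiv.sumCompl (· ∈ s))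
        (Equiv.sumCompl (· ∈ s)) := by
    rfl
  rw [this, permMatrix_submatrix σ s hp, Matrix.charpoly_fromBlocks_zero₁₂]

lemma charpoly_one_matrix (γ : Type*) [Fintype γ] [DecidableEq γ] :
    ((1 : Matrix γ γ ℂ)).charpoly = (X - 1) ^ (Fintype.card γ) := by
  have : charmatrix (1 : Matrix γ γ ℂ) = Matrix.diagonal (fun _ => (X : ℂ[X]) - 1) := by
    ext i j
    by_cases h : i = j
    · subst h; rw [charmatrix_apply_eq, Matrix.diagonal_apply_eq]; simp
    · rw [charmatrix_apply_ne _ _ _ h, Matrix.diagonal_apply_ne _ h]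
      simp [Matrix.one_apply_ne h]
  rw [Matrix.charpoly, this, Matrix.det_diagonal, Finset.prod_const, Finset.card_univ]

lemma perm_one_toMatrix : ((1 : Equiv.Perm β).toPEquiv.toMatrix : Matrix β β ℂ) = 1 := by
  ext i j
  rw [permMatrix_apply]
  simp [Matrix.one_apply]
  congr

/-- Main auxiliary result, for arbitrary finite types. -/
lemma charpoly_perm (σ : Equiv.Perm β) :
    (σ.toPEquiv.toMatrix : Matrix β β ℂ).charpoly =
      (X - 1) ^ (Fintype.card β - σ.cycleType.sum) *
        (σ.cycleType.map (fun ℓ => (X : ℂ[X]) ^ ℓ - 1)).prod := by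
  classical
  induction σ using Equiv.Perm.cycle_induction_on with
  | base_one =>
      rw [perm_one_toMatrix, charpoly_one_matrix]
      simp [Equiv.Perm.cycleType_one]
  | base_cycles σ hσ =>
      rw [charpoly_isCycle σ hσ, hσ.cycleType]
      simp [Equiv.Perm.sum_cycleType]
  | induction_disjoint g h hd hg ihg ihh =>
      set ℓ := g.support.card with hℓ
      have hinv : ∀ x, x ∈ g.support ↔ (g * h) x ∈ g.support := by
        intro x
        constructor
        · intro hx
          have hhx : h x = x := by
            rcases hd x with h1 | h1
            · exact absurd h1 (Equiv.Perm.mem_support.1 hx)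
            · exact h1
          rw [Equiv.Perm.mul_apply, hhx]
          exact Equiv.Perm.apply_mem_support.2 hx
        · intro hx
          by_contra hxn
          have hgx : g x = x := Equiv.Perm.notMem_support.1 hxn
          have hhx : h x ∉ g.support := by
            by_cases hxh : x ∈ h.support
            · intro hcon
              exact Finset.disjoint_left.1 hd.disjoint_support hcon
                (Equiv.Perm.apply_mem_support.2 hxh)
            · rw [Equiv.Perm.notMem_support.1 hxh]; exact hxn
          rw [Equiv.Perm.mul_apply] at hx
          exact hhx (by
            have : g (h x) = h x := Equiv.Perm.notMem_support.1 (by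
              intro hcon
              exact hhx (by simpa using hcon))
            rwa [this] at hx)
      -- h fixes support of g pointwise
      have hfix : ∀ x ∈ g.support, h x = x := by
        intro x hx
        rcases hd x with h1 | h1
        · exact absurd h1 (Equiv.Perm.mem_support.1 hx)
        · exact h1
      have hinvh : ∀ x, x ∈ g.support ↔ h x ∈ g.support := by
        intro x
        constructor
        · intro hx; rw [hfix x hx]; exact hx
        · intro hx
          by_contra hxn
          by_cases hxh : x ∈ h.support
          · exact Finset.disjoint_left.1 hd.disjoint_support hx
              (Equiv.Perm.apply_mem_support.2 hxh)
          · rw [Equiv.Perm.notMem_support.1 hxh] at hx; exact hxn hx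
      have hginv : ∀ x, g x ∈ g.support ↔ x ∈ g.support := fun x =>
        (Equiv.Perm.apply_mem_support)
      -- the permutation (g*h) restricted to the support of g equals the restriction of g
      have hBperm : (g * h).subtypePerm (fun x => (hinv x).symm) = g.subtypePerm hginv := by
        ext x
        simp [Equiv.Perm.subtypePerm_apply, Equiv.Perm.mul_apply, hfix x x.2]
      -- the restriction of g to its support is a cycle with full support
      have hgsub_cyc : (g.subtypePerm hginv).IsCycle := by
        obtain ⟨x, hx, hall⟩ := hg
        refine ⟨⟨x, Equiv.Perm.mem_support.2 hx⟩, ?_, ?_⟩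
        · intro hcon
          exact hx (congrArg Subtype.val hcon)
        · intro y hy
          apply Equiv.Perm.SameCycle.subtypePerm
          apply hall
          intro hcon
          apply hy
          ext
          exact hcon
      have hgsub_supp : (g.subtypePerm hginv).support = Finset.univ := by
        ext x
        simp only [Finset.mem_univ, iff_true, Equiv.Perm.mem_support,
          Equiv.Perm.subtypePerm_apply]
        intro hcon
        exact Equiv.Perm.mem_support.1 x.2 (congrArg Subtype.val hcon)
      have hcard_sub : Fintype.card {x // x ∈ g.support} = ℓ := Fintype.card_coe _
      have hBpoly : ((g.subtypePerm hginv).toPEquiv.toMatrix :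
          Matrix {x // x ∈ g.support} {x // x ∈ g.support} ℂ).charpoly = (X : ℂ[X]) ^ ℓ - 1 := by
        rw [charpoly_isCycle _ hgsub_cyc, hgsub_supp, Finset.card_univ, hcard_sub,
          Nat.sub_self, pow_zero, one_mul]
      -- the permutation (g*h) off the support of g equals the restriction of h
      have hCperm : (g * h).subtypePerm (fun x => not_iff_not.2 (hinv x).symm) =
          h.subtypePerm (p := fun x => ¬ x ∈ g.support) (fun x => not_iff_not.2 (hinvh x).symm) := by
        ext x
        have hx2 : (x : β) ∉ g.support := x.2
        have hh : h (x : β) ∉ g.support := fun hmem => hx2 ((hinvh x).2 hmem)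
        simp [Equiv.Perm.subtypePerm_apply, Equiv.Perm.mul_apply,
          Equiv.Perm.notMem_support.1 hh]
      -- h restricted to the support of g is the identity
      have hhid : h.subtypePerm (fun x => (hinvh x).symm) = 1 := by
        ext x
        simp [Equiv.Perm.subtypePerm_apply, hfix x x.2]
      set Cp : ℂ[X] := ((h.subtypePerm (fun x => not_iff_not.2 (hinvh x).symm)).toPEquiv.toMatrix :
        Matrix {x // ¬ x ∈ g.support} {x // ¬ x ∈ g.support} ℂ).charpoly with hCp
      have hsplit_h := charpoly_split h g.support hinvh
      rw [hhid, perm_one_toMatrix, charpoly_one_matrix, ihh] at hsplit_h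
      simp only [Fintype.card_coe] at hsplit_h
      rw [← hℓ] at hsplit_h
      -- numeric bookkeeping
      set c := Fintype.card β with hc
      set s := h.cycleType.sum with hs
      have hssupp : s = h.support.card := Equiv.Perm.sum_cycleType h
      have hle : ℓ + s ≤ c := by
        rw [hssupp, hℓ, ← Finset.card_union_of_disjoint hd.disjoint_support]
        exact Finset.card_le_univ _
      have hcs : c - s = ℓ + (c - ℓ - s) := by omega
      have hXne : ((X - 1 : ℂ[X])) ^ ℓ ≠ 0 := by
        apply pow_ne_zero
        have : (X - 1 : ℂ[X]) = X - C 1 := by rw [Polynomial.C_1]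
        rw [this]
        exact Polynomial.X_sub_C_ne_zero 1
      have hCpval : Cp = (X - 1) ^ (c - ℓ - s) *
          (h.cycleType.map (fun ℓ => (X : ℂ[X]) ^ ℓ - 1)).prod := by
        apply mul_left_cancel₀ hXne
        rw [← hsplit_h, hcs, pow_add]
        ring
      rw [charpoly_split (g * h) g.support hinv]
      rw [hBperm]
      rw [hCperm]
      rw [hBpoly]
      rw [← hCp, hCpval, Equiv.Perm.Disjoint.cycleType_mul hd, hg.cycleType]
      simp only [Multiset.sum_add, Multiset.map_add, Multiset.prod_add,
        Multiset.coe_singleton, Multiset.map_singleton, Multiset.prod_singleton,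
        Multiset.sum_singleton, ← hℓ, ← hs]
      rw [show c - (ℓ + s) = c - ℓ - s by omega]
      ring

end PermCharpolyAux

/-- The characteristic polynomial of the permutation matrix of `σ` over `ℂ` is
`(X - 1) ^ (number of fixed points) * ∏ over cycle lengths ℓ of (X ^ ℓ - 1)`. -/
theorem charpoly_permMatrix (n : ℕ) (σ : Equiv.Perm (Fin n)) :
    (σ.toPEquiv.toMatrix : Matrix (Fin n) (Fin n) ℂ).charpoly =
      (X - 1) ^ (n - σ.cycleType.sum) *
        (σ.cycleType.map (fun ℓ => (X : ℂ[X]) ^ ℓ - 1)).prod := by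
  have := PermCharpolyAux.charpoly_perm σ
  simpa using this
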